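/- Let H be a complex Hilbert space and let a : H → H be a continuous linear operator admitting a parametrix p : H → H. Then the commutator [a,p] = a∘p − p∘a is of finite rank, the kernel of a and the cokernel H/range(a) are finite-dimensional, and Tr([a,p]) = dim ker(a) − dim (H/range(a)); in particular this trace is independent of the choice of parametrix p. -/

import Mathlib

open LinearMap Submodule

section Aux
variable {H : Type*} [AddCommGroup H] [Module ℂ H]

/-- Algebraic trace of a finite-rank endomorphism: the trace of its restriction to its range. -/
noncomputable def trFR (f : H →ₗ[ℂ] H) : ℂ :=
  LinearMap.trace ℂ (LinearMap.range f)
    (f.restrict (p := LinearMap.range f) (q := LinearMap.range f) (fun x _ => ⟨x, rfl⟩))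

lemma trFR_eq_on (f : H →ₗ[ℂ] H) (N : Submodule ℂ H) [FiniteDimensional ℂ N]
    (hN : LinearMap.range f ≤ N) :
    trFR f = LinearMap.trace ℂ N (f.restrict (fun x _ => hN ⟨x, rfl⟩)) := by
  haveI : FiniteDimensional ℂ (LinearMap.range f) :=
    Submodule.finiteDimensional_of_le hN
  set P := LinearMap.range f with hP
  let ι : P →ₗ[ℂ] N := Submodule.inclusion hN
  let c : N →ₗ[ℂ] P := (f.comp N.subtype).codRestrict P (fun x => ⟨x, rfl⟩)
  have h1 : f.restrict (p := N) (q := N) (fun x _ => hN ⟨x, rfl⟩) = ι ∘ₗ c := by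
    ext x; rfl
  have h2 : c ∘ₗ ι = f.restrict (p := P) (q := P) (fun x _ => ⟨x, rfl⟩) := by
    ext x; rfl
  rw [h1, LinearMap.trace_comp_comm' c ι, h2, trFR]

end Aux

section Aux2
variable {H : Type*} [AddCommGroup H] [Module ℂ H]

lemma trFR_factor (P : Submodule ℂ H) [FiniteDimensional ℂ P]
    (v : P →ₗ[ℂ] H) (w : H →ₗ[ℂ] P) :
    trFR (v ∘ₗ w) = LinearMap.trace ℂ P (w ∘ₗ v) := by
  set N := LinearMap.range v with hNdef
  have hN : LinearMap.range (v ∘ₗ w) ≤ N := by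
    rintro y ⟨x, rfl⟩; exact ⟨w x, rfl⟩
  rw [trFR_eq_on _ N hN]
  let vc : P →ₗ[ℂ] N := v.codRestrict N (fun x => ⟨x, rfl⟩)
  have h1 : (v ∘ₗ w).restrict (p := N) (q := N) (fun x _ => hN ⟨x, rfl⟩)
      = vc ∘ₗ (w ∘ₗ N.subtype) := by
    ext x; rfl
  have h2 : (w ∘ₗ N.subtype) ∘ₗ vc = w ∘ₗ v := by
    ext x; rfl
  rw [h1, LinearMap.trace_comp_comm' (w ∘ₗ N.subtype) vc, h2]

lemma trFR_comm (f g : H →ₗ[ℂ] H) [FiniteDimensional ℂ (LinearMap.range g)] :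
    trFR (f ∘ₗ g) = trFR (g ∘ₗ f) := by
  set P := LinearMap.range g with hP
  let g' : H →ₗ[ℂ] P := g.codRestrict P (fun x => ⟨x, rfl⟩)
  have h1 : f ∘ₗ g = (f ∘ₗ P.subtype) ∘ₗ g' := by ext x; rfl
  have h2 : g ∘ₗ f = P.subtype ∘ₗ (g' ∘ₗ f) := by ext x; rfl
  rw [h1, h2, trFR_factor P (f ∘ₗ P.subtype) g', trFR_factor P P.subtype (g' ∘ₗ f),
    comp_assoc]

lemma trFR_add (f g : H →ₗ[ℂ] H) [FiniteDimensional ℂ (LinearMap.range f)]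
    [FiniteDimensional ℂ (LinearMap.range g)] :
    trFR (f + g) = trFR f + trFR g := by
  set N := LinearMap.range f ⊔ LinearMap.range g with hN
  haveI : FiniteDimensional ℂ N := Submodule.finiteDimensional_sup _ _
  have hf : LinearMap.range f ≤ N := le_sup_left
  have hg : LinearMap.range g ≤ N := le_sup_right
  have hfg : LinearMap.range (f + g) ≤ N := by
    rintro y ⟨x, rfl⟩
    exact N.add_mem (hf ⟨x, rfl⟩) (hg ⟨x, rfl⟩)
  rw [trFR_eq_on f N hf, trFR_eq_on g N hg, trFR_eq_on (f + g) N hfg]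
  have : (f + g).restrict (p := N) (q := N) (fun x _ => hfg ⟨x, rfl⟩)
      = f.restrict (fun x _ => hf ⟨x, rfl⟩) + g.restrict (fun x _ => hg ⟨x, rfl⟩) := by
    ext x; rfl
  rw [this, map_add]

lemma trFR_neg (f : H →ₗ[ℂ] H) [FiniteDimensional ℂ (LinearMap.range f)] :
    trFR (-f) = -trFR f := by
  set N := LinearMap.range f with hN
  have hneg : LinearMap.range (-f) ≤ N := by
    rintro y ⟨x, rfl⟩
    exact N.neg_mem ⟨x, rfl⟩
  rw [trFR_eq_on (-f) N hneg, trFR_eq_on f N (le_refl N)]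
  have : (-f).restrict (p := N) (q := N) (fun x _ => hneg ⟨x, rfl⟩)
      = -(f.restrict (fun x _ => (le_refl N) ⟨x, rfl⟩)) := by
    ext x; rfl
  rw [this, map_neg]

lemma trFR_sub (f g : H →ₗ[ℂ] H) [FiniteDimensional ℂ (LinearMap.range f)]
    [FiniteDimensional ℂ (LinearMap.range g)] :
    trFR (f - g) = trFR f - trFR g := by
  haveI : FiniteDimensional ℂ (LinearMap.range (-g)) := by
    have h : LinearMap.range (-g) ≤ LinearMap.range g := by
      rintro y ⟨x, rfl⟩; exact ⟨-x, by simp⟩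
    exact Submodule.finiteDimensional_of_le h
  rw [sub_eq_add_neg, trFR_add f (-g), trFR_neg g, sub_eq_add_neg]
end Aux2

section Aux3
variable {H : Type*} [AddCommGroup H] [Module ℂ H]

lemma trFR_neg_proj (P Q : Submodule ℂ H) [FiniteDimensional ℂ P] (h : IsCompl P Q) :
    trFR (-(P.subtype ∘ₗ Submodule.linearProjOfIsCompl P Q h)) = -(Module.finrank ℂ P : ℂ) := by
  set pr := Submodule.linearProjOfIsCompl P Q h
  have h1 : -(P.subtype ∘ₗ pr) = P.subtype ∘ₗ (-pr) := by ext x; simp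
  rw [h1, trFR_factor P P.subtype (-pr)]
  have h2 : (-pr) ∘ₗ P.subtype = -LinearMap.id := by
    ext x
    simp [pr, Submodule.linearProjOfIsCompl, Submodule.projectionOnto_apply_left h]
  rw [h2, map_neg, LinearMap.trace_id]
end Aux3



/-- A continuous linear map is of finite rank if its range is finite dimensional. -/
def FiniteRank {V W : Type*} [NormedAddCommGroup V] [NormedSpace ℂ V]
    [NormedAddCommGroup W] [NormedSpace ℂ W] (T : V →L[ℂ] W) : Prop :=
  FiniteDimensional ℂ (LinearMap.range (T : V →ₗ[ℂ] W))

/-- `p` is a parametrix for `a`: `a∘p - id` and `p∘a - id` are finite rank. -/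
def IsParametrix {H : Type*} [NormedAddCommGroup H] [NormedSpace ℂ H]
    (a p : H →L[ℂ] H) : Prop :=
  FiniteRank (a.comp p - ContinuousLinearMap.id ℂ H) ∧
    FiniteRank (p.comp a - ContinuousLinearMap.id ℂ H)

/-- The trace of a (finite-rank) continuous operator `T`, defined as the trace of the
endomorphism induced by `T` on the subspace `range T`. -/
noncomputable def fTrace {V : Type*} [NormedAddCommGroup V] [NormedSpace ℂ V]
    (T : V →L[ℂ] V) : ℂ :=
  LinearMap.trace ℂ (LinearMap.range (T : V →ₗ[ℂ] V))
    ((T : V →ₗ[ℂ] V).restrict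
      (p := LinearMap.range (T : V →ₗ[ℂ] V)) (q := LinearMap.range (T : V →ₗ[ℂ] V))
      (fun x _hx => ⟨x, rfl⟩))

theorem stmt5 {H : Type*} [NormedAddCommGroup H] [InnerProductSpace ℂ H] [CompleteSpace H]
    (a p : H →L[ℂ] H) (hp : IsParametrix a p) :
    FiniteRank (a.comp p - p.comp a) ∧
    FiniteDimensional ℂ (LinearMap.ker (a : H →ₗ[ℂ] H)) ∧
    FiniteDimensional ℂ (H ⧸ LinearMap.range (a : H →ₗ[ℂ] H)) ∧
    fTrace (a.comp p - p.comp a) =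
      (Module.finrank ℂ (LinearMap.ker (a : H →ₗ[ℂ] H)) : ℂ) -
        (Module.finrank ℂ (H ⧸ LinearMap.range (a : H →ₗ[ℂ] H)) : ℂ) := by
  set a' := (a : H →ₗ[ℂ] H) with ha'
  set p' := (p : H →ₗ[ℂ] H) with hp'
  set F1 := a' ∘ₗ p' - LinearMap.id with hF1def
  set F2 := p' ∘ₗ a' - LinearMap.id with hF2def
  have hcoe1 : ((a.comp p - ContinuousLinearMap.id ℂ H : H →L[ℂ] H) : H →ₗ[ℂ] H) = F1 := by
    ext x; rfl
  have hcoe2 : ((p.comp a - ContinuousLinearMap.id ℂ H : H →L[ℂ] H) : H →ₗ[ℂ] H) = F2 := by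
    ext x; rfl
  have hcoeT : ((a.comp p - p.comp a : H →L[ℂ] H) : H →ₗ[ℂ] H) = F1 - F2 := by
    ext x
    show a (p x) - p (a x) = (a' (p' x) - x) - (p' (a' x) - x)
    abel
  haveI hF1fd : FiniteDimensional ℂ (LinearMap.range F1) := by rw [← hcoe1]; exact hp.1
  haveI hF2fd : FiniteDimensional ℂ (LinearMap.range F2) := by rw [← hcoe2]; exact hp.2
  -- kernel is finite dimensional
  have hker : LinearMap.ker a' ≤ LinearMap.range F2 := by
    intro x hx
    refine ⟨-x, ?_⟩
    have hx0 : a' x = 0 := hx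
    show p' (a' (-x)) - (-x) = x
    simp [hx0]
  haveI hkerfd : FiniteDimensional ℂ (LinearMap.ker a') :=
    Submodule.finiteDimensional_of_le hker
  -- cokernel is finite dimensional
  let φ : LinearMap.range F1 →ₗ[ℂ] H ⧸ LinearMap.range a' :=
    (LinearMap.range a').mkQ ∘ₗ (LinearMap.range F1).subtype
  have hφ : Function.Surjective φ := by
    intro y
    obtain ⟨x, rfl⟩ := Submodule.mkQ_surjective _ y
    refine ⟨⟨-(F1 x), (LinearMap.range F1).neg_mem ⟨x, rfl⟩⟩, ?_⟩
    show Submodule.Quotient.mk (-(F1 x)) = Submodule.Quotient.mk x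
    rw [Submodule.Quotient.eq]
    refine ⟨-(p' x), ?_⟩
    show a' (-(p' x)) = -(F1 x) - x
    show a' (-(p' x)) = -(a' (p' x) - x) - x
    simp
  haveI hcokfd : FiniteDimensional ℂ (H ⧸ LinearMap.range a') :=
    Module.Finite.of_surjective φ hφ
  -- complements
  obtain ⟨K, hK⟩ := Submodule.exists_isCompl (LinearMap.ker a')
  obtain ⟨C, hC⟩ := Submodule.exists_isCompl (LinearMap.range a')
  haveI hCfd : FiniteDimensional ℂ C :=
    Module.Finite.equiv (Submodule.quotientEquivOfIsCompl _ C hC)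
  have hfinrankC : Module.finrank ℂ C = Module.finrank ℂ (H ⧸ LinearMap.range a') :=
    (LinearEquiv.finrank_eq (Submodule.quotientEquivOfIsCompl _ C hC)).symm
  set prR := Submodule.linearProjOfIsCompl (LinearMap.range a') C hC with hprR
  set prC := Submodule.linearProjOfIsCompl C (LinearMap.range a') hC.symm with hprC
  set prKer := Submodule.linearProjOfIsCompl (LinearMap.ker a') K hK with hprKer
  set prK := Submodule.linearProjOfIsCompl K (LinearMap.ker a') hK.symm with hprK
  -- the equivalence K ≃ range a'
  let m : K →ₗ[ℂ] LinearMap.range a' :=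
    (a'.domRestrict K).codRestrict _ (fun x => ⟨x, rfl⟩)
  have hm_apply : ∀ k : K, (m k : H) = a' k := fun _ => rfl
  have hm_bij : Function.Bijective m := by
    constructor
    · intro x y hxy
      have h1 : a' ((x : H) - y) = 0 := by
        have := congrArg (Subtype.val) hxy
        rw [hm_apply, hm_apply] at this
        simp [map_sub, this]
      have h2 : ((x : H) - y) ∈ K := K.sub_mem x.2 y.2
      have h3 : (x : H) - y = 0 := Submodule.disjoint_def.mp hK.disjoint _ h1 h2
      exact Subtype.ext (by linear_combination (norm := abel) h3)
    · rintro ⟨y, x, rfl⟩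
      refine ⟨prK x, Subtype.ext ?_⟩
      rw [hm_apply]
      have hsum : ((prKer x : H)) + ((prK x : H)) = x :=
        Submodule.projection_add_projection_eq_self hK x
      have : a' ((prKer x : H)) = 0 := (prKer x).2
      calc a' ((prK x : H)) = a' ((prKer x : H)) + a' ((prK x : H)) := by rw [this]; abel
        _ = a' x := by rw [← map_add, hsum]
  let e : K ≃ₗ[ℂ] LinearMap.range a' := LinearEquiv.ofBijective m hm_bij
  have he_apply : ∀ k : K, e k = m k := fun _ => rfl
  set q : H →ₗ[ℂ] H := K.subtype ∘ₗ (e.symm : LinearMap.range a' →ₗ[ℂ] K) ∘ₗ prR with hqdef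
  set G1 := a' ∘ₗ q - LinearMap.id with hG1def
  set G2 := q ∘ₗ a' - LinearMap.id with hG2def
  -- a∘q - 1 is minus the projection onto C
  have haq : G1 = -(C.subtype ∘ₗ prC) := by
    ext x
    have h1 : a' (q x) = (prR x : H) := by
      show a' ((e.symm (prR x) : K) : H) = _
      rw [← hm_apply, ← he_apply, e.apply_symm_apply]
    have hsum : ((prR x : H)) + ((prC x : H)) = x :=
      Submodule.projection_add_projection_eq_self hC x
    show a' (q x) - x = -((prC x : H))
    rw [h1]
    linear_combination (norm := abel) hsum
  -- q∘a - 1 is minus the projection onto ker a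
  have hqa : G2 = -((LinearMap.ker a').subtype ∘ₗ prKer) := by
    ext x
    have h0 : prR (a' x) = ⟨a' x, ⟨x, rfl⟩⟩ :=
      Submodule.linearProjOfIsCompl_apply_left hC ⟨a' x, ⟨x, rfl⟩⟩
    have h1 : e (prK x) = prR (a' x) := by
      rw [h0, he_apply]
      apply Subtype.ext
      rw [hm_apply]
      have hsum : ((prKer x : H)) + ((prK x : H)) = x :=
        Submodule.projection_add_projection_eq_self hK x
      have hz : a' ((prKer x : H)) = 0 := (prKer x).2
      calc a' ((prK x : H)) = a' ((prKer x : H)) + a' ((prK x : H)) := by rw [hz]; abel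
        _ = a' x := by rw [← map_add, hsum]
    have h2 : q (a' x) = ((prK x : H)) := by
      show ((e.symm (prR (a' x)) : K) : H) = _
      rw [← h1, e.symm_apply_apply]
    have hsum : ((prKer x : H)) + ((prK x : H)) = x :=
      Submodule.projection_add_projection_eq_self hK x
    show q (a' x) - x = -((prKer x : H))
    rw [h2]
    linear_combination (norm := abel) hsum
  -- finite dimensionality bookkeeping
  haveI hG1fd : FiniteDimensional ℂ (LinearMap.range G1) := by
    have hle : LinearMap.range G1 ≤ C := by
      rw [haq]
      rintro y ⟨x, rfl⟩
      exact C.neg_mem (prC x).2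
    exact Submodule.finiteDimensional_of_le hle
  haveI hG2fd : FiniteDimensional ℂ (LinearMap.range G2) := by
    have hle : LinearMap.range G2 ≤ LinearMap.ker a' := by
      rw [hqa]
      rintro y ⟨x, rfl⟩
      exact (LinearMap.ker a').neg_mem (prKer x).2
    exact Submodule.finiteDimensional_of_le hle
  set r := q - p' with hrdef
  have hrfact : r = G2 ∘ₗ p' - q ∘ₗ F1 := by
    ext x
    show q x - p' x = (q (a' (p' x)) - p' x) - q (a' (p' x) - x)
    rw [map_sub]
    abel
  haveI hrfd : FiniteDimensional ℂ (LinearMap.range r) := by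
    have hle : LinearMap.range r ≤
        LinearMap.range (G2 ∘ₗ p') ⊔ Submodule.map q (LinearMap.range F1) := by
      rw [hrfact]
      rintro y ⟨x, rfl⟩
      exact Submodule.sub_mem _ (Submodule.mem_sup_left ⟨x, rfl⟩)
        (Submodule.mem_sup_right ⟨F1 x, ⟨x, rfl⟩, rfl⟩)
    haveI h1 : FiniteDimensional ℂ (LinearMap.range (G2 ∘ₗ p')) :=
      Submodule.finiteDimensional_of_le (by rintro y ⟨x, rfl⟩; exact ⟨p' x, rfl⟩ :
        LinearMap.range (G2 ∘ₗ p') ≤ LinearMap.range G2)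
    haveI h2 : FiniteDimensional ℂ (Submodule.map q (LinearMap.range F1)) :=
      Module.Finite.map _ q
    haveI := Submodule.finiteDimensional_sup (LinearMap.range (G2 ∘ₗ p'))
      (Submodule.map q (LinearMap.range F1))
    exact Submodule.finiteDimensional_of_le hle
  -- trace identities
  have har : a' ∘ₗ r = G1 - F1 := by
    ext x
    show a' (q x - p' x) = (a' (q x) - x) - (a' (p' x) - x)
    rw [map_sub]; abel
  have hra : r ∘ₗ a' = G2 - F2 := by
    ext x
    show q (a' x) - p' (a' x) = (q (a' x) - x) - (p' (a' x) - x)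
    abel
  have hcomm : trFR (a' ∘ₗ r) = trFR (r ∘ₗ a') := trFR_comm a' r
  rw [har, hra, trFR_sub G1 F1, trFR_sub G2 F2] at hcomm
  have htrG1 : trFR G1 = -(Module.finrank ℂ C : ℂ) := by
    rw [haq]; exact trFR_neg_proj C (LinearMap.range a') hC.symm
  have htrG2 : trFR G2 = -(Module.finrank ℂ (LinearMap.ker a') : ℂ) := by
    rw [hqa]; exact trFR_neg_proj (LinearMap.ker a') K hK
  -- assemble
  refine ⟨?_, hkerfd, hcokfd, ?_⟩
  · show FiniteDimensional ℂ (LinearMap.range ((a.comp p - p.comp a : H →L[ℂ] H) : H →ₗ[ℂ] H))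
    rw [hcoeT]
    haveI := Submodule.finiteDimensional_sup (LinearMap.range F1) (LinearMap.range F2)
    refine Submodule.finiteDimensional_of_le (?_ :
      LinearMap.range (F1 - F2) ≤ LinearMap.range F1 ⊔ LinearMap.range F2)
    rintro y ⟨x, rfl⟩
    exact Submodule.sub_mem _ (Submodule.mem_sup_left ⟨x, rfl⟩)
      (Submodule.mem_sup_right ⟨x, rfl⟩)
  · have hfT : fTrace (a.comp p - p.comp a) =
        trFR (((a.comp p - p.comp a : H →L[ℂ] H) : H →ₗ[ℂ] H)) := rfl
    rw [hfT, hcoeT, trFR_sub F1 F2]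
    have heq : trFR F1 - trFR F2 = trFR G1 - trFR G2 := by linear_combination -hcomm
    rw [heq, htrG1, htrG2, hfinrankC]
    ring
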